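/- Let C be a finite set and σ₁,…,σ_k : C → C. An equivalence relation ⋈ on C is balanced (for all i, c ⋈ d implies σ_i(c) ⋈ σ_i(d)) if and only if for every function f : ℝ × ℝ^k → ℝ the polydiagonal subspace Δ_⋈ = {x ∈ ℝ^C : c ⋈ d → x_c = x_d} is invariant under the admissible map f^N defined by (f^N(x))_c = f(x_c, x_{σ₁(c)}, …, x_{σ_k(c)}). -/
import Mathlib


/-- an equivalence relation `r` on the cells is balanced if and
only if the polydiagonal `Δ_r` is invariant under every admissible map of the
network. -/
theorem stmt_13 {C : Type*} [Fintype C] [DecidableEq C] {k : ℕ}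
    (σ : Fin k → C → C)
    (r : C → C → Prop) (hr : Equivalence r) :
    (∀ i c d, r c d → r (σ i c) (σ i d)) ↔
      (∀ f : ℝ → (Fin k → ℝ) → ℝ, ∀ x : C → ℝ,
        (∀ c d, r c d → x c = x d) →
        ∀ c d, r c d →
          f (x c) (fun i => x (σ i c)) = f (x d) (fun i => x (σ i d))) := by
  classical
  constructor
  · intro hbal f x hx c d hcd
    have h1 : x c = x d := hx c d hcd
    have h2 : (fun i => x (σ i c)) = fun i => x (σ i d) := by
      funext i; exact hx _ _ (hbal i c d hcd)
    rw [h1, h2]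
  · intro hinv i c d hcd
    set x : C → ℝ := fun a => if r (σ i c) a then 1 else 0 with hxdef
    have hx : ∀ a b, r a b → x a = x b := by
      intro a b hab
      simp only [hxdef]
      by_cases h : r (σ i c) a
      · rw [if_pos h, if_pos (hr.trans h hab)]
      · rw [if_neg h, if_neg (fun h' => h (hr.trans h' (hr.symm hab)))]
    have := hinv (fun _ v => v i) x hx c d hcd
    simp only at this
    have hc : x (σ i c) = 1 := by simp [hxdef, hr.refl _]
    rw [hc] at this
    by_contra hne
    have : x (σ i d) = 0 := by simp [hxdef, hne]
    simp_all
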